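/- Suppose g : [a,b] → ℝ is twice continuously differentiable and |g''(x)| ≥ λ > 0 for all x ∈ [a,b], with g'' of constant sign. Then |∫_a^b e(g(x)) dx| ≤ C/√λ for an absolute constant C (one may take C = 4). -/

import Mathlib

open Set Real MeasureTheory

local notation "K" => (2 * (Real.pi : ℂ) * Complex.I)

lemma vdc_K_ne : (2 * (Real.pi : ℂ) * Complex.I) ≠ 0 := by
  simp [Real.pi_ne_zero, Complex.I_ne_zero, Complex.ofReal_ne_zero]

lemma vdc_abs_K : ‖(2 * (Real.pi : ℂ) * Complex.I)‖ = 2 * Real.pi := by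
  simp [Complex.norm_real, abs_of_pos Real.pi_pos]

lemma vdc_abs_e (r : ℝ) :
    ‖Complex.exp (2 * (Real.pi : ℂ) * Complex.I * (r : ℂ))‖ = 1 := by
  have h : (2 * (Real.pi : ℂ) * Complex.I * (r : ℂ)) = ((2 * Real.pi * r : ℝ) : ℂ) * Complex.I := by
    push_cast; ring
  rw [h, Complex.norm_exp_ofReal_mul_I]

lemma vdc_norm_e (r : ℝ) :
    ‖Complex.exp (2 * (Real.pi : ℂ) * Complex.I * (r : ℂ))‖ = 1 := by
  exact vdc_abs_e r

lemma vdc_norm_K : ‖(2 * (Real.pi : ℂ) * Complex.I)‖ = 2 * Real.pi := by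
  exact vdc_abs_K

lemma vdc_intervalIntegral_conj (f : ℝ → ℂ) (a b : ℝ) :
    ∫ x in a..b, (starRingEnd ℂ) (f x) = (starRingEnd ℂ) (∫ x in a..b, f x) := by
  rw [intervalIntegral, intervalIntegral, integral_conj, integral_conj, ← map_sub]

/-- First derivative test on a subinterval `[c,d]` of `[a,b]`, where `g''` is positive
and `|g'| ≥ μ` with constant sign. -/
lemma vdc_fdt (a b c d : ℝ) (g g' g'' : ℝ → ℝ) (mu : ℝ) (hmu : 0 < mu)
    (hcd : c ≤ d) (hc : a ≤ c) (hd : d ≤ b)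
    (hgc : ContinuousOn g (Icc a b)) (hg'c : ContinuousOn g' (Icc a b))
    (hg''c : ContinuousOn g'' (Icc a b))
    (hgd : ∀ x ∈ Ioo a b, HasDerivAt g (g' x) x)
    (hg'd : ∀ x ∈ Ioo a b, HasDerivAt g' (g'' x) x)
    (hpos : ∀ x ∈ Icc a b, 0 < g'' x)
    (hsgn : (∀ x ∈ Icc c d, mu ≤ g' x) ∨ (∀ x ∈ Icc c d, g' x ≤ -mu)) :
    ‖(∫ x in c..d, Complex.exp (2 * (Real.pi : ℂ) * Complex.I * (g x : ℂ)))‖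
      ≤ 1 / (2 * mu) := by
  have hsub : Icc c d ⊆ Icc a b := Icc_subset_Icc hc hd
  have hsubo : Ioo c d ⊆ Ioo a b := Ioo_subset_Ioo hc hd
  have habs : ∀ x ∈ Icc c d, mu ≤ |g' x| := by
    intro x hx
    rcases hsgn with h | h
    · exact le_trans (h x hx) (le_abs_self _)
    · exact le_trans (le_neg_of_le_neg (h x hx)) (neg_le_abs _)
  have hne : ∀ x ∈ Icc c d, g' x ≠ 0 := by
    intro x hx h0
    have := habs x hx
    rw [h0, abs_zero] at this
    linarith
  -- the antiderivative used in integration by parts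
  set F : ℝ → ℂ := fun x => Complex.exp (K * (g x : ℂ)) / (K * (g' x : ℂ)) with hF
  -- the remainder term integrand
  set ψ : ℝ → ℂ := fun x => Complex.exp (K * (g x : ℂ)) * (g'' x : ℂ) / (K * (g' x : ℂ) ^ 2)
    with hψ
  -- continuity facts
  have hEc : ContinuousOn (fun x => Complex.exp (K * (g x : ℂ))) (Icc a b) :=
    Complex.continuous_exp.comp_continuousOn
      (continuousOn_const.mul (Complex.continuous_ofReal.comp_continuousOn hgc))
  have hg'ne : ∀ x ∈ Icc c d, (K * (g' x : ℂ)) ≠ 0 := by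
    intro x hx
    exact mul_ne_zero vdc_K_ne (by exact_mod_cast hne x hx)
  have hFc : ContinuousOn F (Icc c d) := by
    apply (hEc.mono hsub).div
      (continuousOn_const.mul
        (Complex.continuous_ofReal.comp_continuousOn (hg'c.mono hsub)))
    exact hg'ne
  have hψc : ContinuousOn ψ (Icc c d) := by
    apply ((hEc.mono hsub).mul
      (Complex.continuous_ofReal.comp_continuousOn (hg''c.mono hsub))).div
      (continuousOn_const.mul
        ((Complex.continuous_ofReal.comp_continuousOn (hg'c.mono hsub)).pow 2))
    intro x hx
    exact mul_ne_zero vdc_K_ne (pow_ne_zero 2 (Complex.ofReal_ne_zero.2 (hne x hx)))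
  have hφc : ContinuousOn (fun x => Complex.exp (K * (g x : ℂ)) - ψ x) (Icc c d) :=
    (hEc.mono hsub).sub hψc
  -- derivative of F
  have hFd : ∀ x ∈ Ioo c d,
      HasDerivAt F (Complex.exp (K * (g x : ℂ)) - ψ x) x := by
    intro x hx
    have hx' := hsubo hx
    have hxm : x ∈ Icc c d := Ioo_subset_Icc_self hx
    have h1 : HasDerivAt (fun y => ((g y : ℝ) : ℂ)) (g' x : ℂ) x :=
      (hgd x hx').ofReal_comp
    have h2 : HasDerivAt (fun y => K * ((g y : ℝ) : ℂ)) (K * (g' x : ℂ)) x :=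
      h1.const_mul _
    have h3 : HasDerivAt (fun y => Complex.exp (K * (g y : ℂ)))
        (Complex.exp (K * (g x : ℂ)) * (K * (g' x : ℂ))) x := h2.cexp
    have h4 : HasDerivAt (fun y => K * ((g' y : ℝ) : ℂ)) (K * (g'' x : ℂ)) x :=
      ((hg'd x hx').ofReal_comp).const_mul _
    have h5 := h3.div h4 (hg'ne x hxm)
    have hgx : (g' x : ℂ) ≠ 0 := Complex.ofReal_ne_zero.2 (hne x hxm)
    have hπ0 : ((Real.pi : ℝ) : ℂ) ≠ 0 := Complex.ofReal_ne_zero.2 Real.pi_ne_zero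
    have heq : (Complex.exp (K * (g x : ℂ)) * (K * (g' x : ℂ)) * (K * (g' x : ℂ))
          - Complex.exp (K * (g x : ℂ)) * (K * (g'' x : ℂ))) / (K * (g' x : ℂ)) ^ 2
        = Complex.exp (K * (g x : ℂ)) - ψ x := by
      simp only [hψ]
      field_simp [hgx, hπ0, Complex.I_ne_zero]
    rw [← heq]
    exact h5
  -- integration by parts identity
  have hFTC : ∫ x in c..d, (Complex.exp (K * (g x : ℂ)) - ψ x) = F d - F c := by
    apply intervalIntegral.integral_eq_sub_of_hasDeriv_right_of_le hcd hFc
      (fun x hx => (hFd x hx).hasDerivWithinAt)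
    exact hφc.intervalIntegrable_of_Icc hcd
  have hEint : IntervalIntegrable (fun x => Complex.exp (K * (g x : ℂ))) volume c d :=
    (hEc.mono hsub).intervalIntegrable_of_Icc hcd
  have hψint : IntervalIntegrable ψ volume c d := hψc.intervalIntegrable_of_Icc hcd
  have hsplit : ∫ x in c..d, Complex.exp (K * (g x : ℂ))
      = (F d - F c) + ∫ x in c..d, ψ x := by
    rw [← hFTC, intervalIntegral.integral_sub hEint hψint]
    ring
  -- value of the real integral of g''/g'^2
  have hreal : ∫ x in c..d, (g'' x / (g' x) ^ 2) = (-(g' d)⁻¹) - (-(g' c)⁻¹) := by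
    apply intervalIntegral.integral_eq_sub_of_hasDeriv_right_of_le hcd
      (f := fun x => -(g' x)⁻¹)
    · exact ((hg'c.mono hsub).inv₀ hne).neg
    · intro x hx
      have hx' := hsubo hx
      have hxm : x ∈ Icc c d := Ioo_subset_Icc_self hx
      have h := ((hg'd x hx').inv (hne x hxm)).neg
      have heq : -(-g'' x / g' x ^ 2) = g'' x / g' x ^ 2 := by ring
      rw [heq] at h
      exact h.hasDerivWithinAt
    · apply ContinuousOn.intervalIntegrable_of_Icc hcd
      exact (hg''c.mono hsub).div ((hg'c.mono hsub).pow 2)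
        (fun x hx => pow_ne_zero 2 (hne x hx))
  -- bound the remainder term
  have hψnorm : ∀ x ∈ Icc c d, ‖ψ x‖ = (1 / (2 * Real.pi)) * (g'' x / (g' x) ^ 2) := by
    intro x hx
    have hxab := hsub hx
    have hπne : Real.pi ≠ 0 := Real.pi_ne_zero
    have hg'x : g' x ≠ 0 := hne x hx
    simp only [hψ]
    rw [norm_div, norm_mul, vdc_norm_e, one_mul, norm_mul, vdc_norm_K, norm_pow,
      Complex.norm_real, Complex.norm_real, Real.norm_eq_abs, Real.norm_eq_abs,
      abs_of_pos (hpos x hxab), sq_abs]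
    field_simp
  have hψbound : ‖∫ x in c..d, ψ x‖ ≤ (1 / (2 * Real.pi)) * ((g' c)⁻¹ - (g' d)⁻¹) := by
    calc ‖∫ x in c..d, ψ x‖ ≤ ∫ x in c..d, ‖ψ x‖ :=
          intervalIntegral.norm_integral_le_integral_norm hcd
      _ = ∫ x in c..d, (1 / (2 * Real.pi)) * (g'' x / (g' x) ^ 2) := by
          apply intervalIntegral.integral_congr
          intro x hx
          exact hψnorm x (by rwa [uIcc_of_le hcd] at hx)
      _ = (1 / (2 * Real.pi)) * ∫ x in c..d, (g'' x / (g' x) ^ 2) := by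
          rw [intervalIntegral.integral_const_mul]
      _ = (1 / (2 * Real.pi)) * ((g' c)⁻¹ - (g' d)⁻¹) := by rw [hreal]; ring_nf
  -- bound the boundary terms
  have hFbound : ∀ x ∈ Icc c d, ‖F x‖ ≤ 1 / (2 * Real.pi * mu) := by
    intro x hx
    simp only [hF]
    rw [norm_div, vdc_norm_e, norm_mul, vdc_norm_K, Complex.norm_real, Real.norm_eq_abs]
    have h1 : mu ≤ |g' x| := habs x hx
    exact one_div_le_one_div_of_le (by positivity)
      (mul_le_mul_of_nonneg_left h1 (by positivity))
  -- the reciprocal difference is in [0, 1/mu]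
  have hrecip : (g' c)⁻¹ - (g' d)⁻¹ ≤ 1 / mu := by
    have hcm : c ∈ Icc c d := ⟨le_rfl, hcd⟩
    have hdm : d ∈ Icc c d := ⟨hcd, le_rfl⟩
    rcases hsgn with h | h
    · have h1 : mu ≤ g' c := h c hcm
      have h2 : mu ≤ g' d := h d hdm
      have h5 : (g' c)⁻¹ ≤ 1 / mu := by
        rw [inv_eq_one_div]
        exact one_div_le_one_div_of_le hmu h1
      have h3 : (0:ℝ) < (g' d)⁻¹ := inv_pos.2 (lt_of_lt_of_le hmu h2)
      linarith
    · have h1 : g' c ≤ -mu := h c hcm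
      have h2 : g' d ≤ -mu := h d hdm
      have h3 : (g' c)⁻¹ < 0 := inv_lt_zero.2 (by linarith)
      have h4 : -(g' d)⁻¹ ≤ 1 / mu := by
        rw [← inv_neg, inv_eq_one_div]
        exact one_div_le_one_div_of_le hmu (by linarith)
      linarith
  -- put everything together
  rw [hsplit]
  have hπ : (3:ℝ) ≤ Real.pi := by linarith [Real.pi_gt_three]
  calc ‖(F d - F c) + ∫ x in c..d, ψ x‖
      ≤ ‖F d‖ + ‖F c‖ + ‖∫ x in c..d, ψ x‖ := by
        calc ‖(F d - F c) + ∫ x in c..d, ψ x‖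
            ≤ ‖F d - F c‖ + ‖∫ x in c..d, ψ x‖ := norm_add_le _ _
          _ ≤ ‖F d‖ + ‖F c‖ + ‖∫ x in c..d, ψ x‖ := by
              have := norm_sub_le (F d) (F c); linarith
    _ ≤ 1 / (2 * Real.pi * mu) + 1 / (2 * Real.pi * mu)
        + (1 / (2 * Real.pi)) * (1 / mu) := by
        have hb1 := hFbound d ⟨hcd, le_rfl⟩
        have hb2 := hFbound c ⟨le_rfl, hcd⟩
        have hψ0 : (0:ℝ) ≤ 1 / (2 * Real.pi) := by positivity
        have hrr : (1 / (2 * Real.pi)) * ((g' c)⁻¹ - (g' d)⁻¹)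
            ≤ (1 / (2 * Real.pi)) * (1 / mu) :=
          mul_le_mul_of_nonneg_left hrecip hψ0
        linarith
    _ ≤ 1 / (2 * mu) := by
        have hπ0 : (0:ℝ) < Real.pi := Real.pi_pos
        have e1 : 1 / (2 * Real.pi * mu) ≤ 1 / (6 * mu) :=
          one_div_le_one_div_of_le (by positivity) (by nlinarith)
        have e2 : (1 / (2 * Real.pi)) * (1 / mu) = 1 / (2 * Real.pi * mu) := by
          rw [one_div_mul_one_div]
        have e3 : 1 / (6 * mu) * 3 = 1 / (2 * mu) := by
          rw [div_mul_eq_mul_div, div_eq_div_iff (by positivity) (by positivity)]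
          ring
        linarith

/-- Key lemma: van der Corput with `g'' ≥ λ > 0`. -/
lemma vdc_key (a b : ℝ) (hab : a ≤ b) (g g' g'' : ℝ → ℝ) (lam : ℝ) (hlam : 0 < lam)
    (hg : ∀ x ∈ Icc a b, HasDerivWithinAt g (g' x) (Icc a b) x)
    (hg' : ∀ x ∈ Icc a b, HasDerivWithinAt g' (g'' x) (Icc a b) x)
    (hcont : ContinuousOn g'' (Icc a b))
    (hpos : ∀ x ∈ Icc a b, lam ≤ g'' x) :
    ‖(∫ x in a..b, Complex.exp (2 * (Real.pi : ℂ) * Complex.I * (g x : ℂ)))‖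
      ≤ 4 / Real.sqrt lam := by
  have hgc : ContinuousOn g (Icc a b) := fun x hx => (hg x hx).continuousWithinAt
  have hg'c : ContinuousOn g' (Icc a b) := fun x hx => (hg' x hx).continuousWithinAt
  have hgd : ∀ x ∈ Ioo a b, HasDerivAt g (g' x) x := fun x hx =>
    (hg x (Ioo_subset_Icc_self hx)).hasDerivAt (Icc_mem_nhds hx.1 hx.2)
  have hg'd : ∀ x ∈ Ioo a b, HasDerivAt g' (g'' x) x := fun x hx =>
    (hg' x (Ioo_subset_Icc_self hx)).hasDerivAt (Icc_mem_nhds hx.1 hx.2)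
  have hpos' : ∀ x ∈ Icc a b, 0 < g'' x := fun x hx => lt_of_lt_of_le hlam (hpos x hx)
  set δ : ℝ := Real.sqrt lam with hδdef
  have hδ : 0 < δ := Real.sqrt_pos.2 hlam
  have hδ2 : δ ^ 2 = lam := Real.sq_sqrt hlam.le
  -- the mean-value gap estimate
  have gap : ∀ c ∈ Icc a b, ∀ d ∈ Icc a b, c ≤ d → lam * (d - c) ≤ g' d - g' c := by
    intro c hc d hd hcd
    have hsub : Icc c d ⊆ Icc a b := Icc_subset_Icc hc.1 hd.2
    have hFTC : ∫ x in c..d, g'' x = g' d - g' c := by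
      apply intervalIntegral.integral_eq_sub_of_hasDeriv_right_of_le hcd (hg'c.mono hsub)
      · intro x hx
        exact (hg'd x (Ioo_subset_Ioo hc.1 hd.2 hx)).hasDerivWithinAt
      · exact (hcont.mono hsub).intervalIntegrable_of_Icc hcd
    have hmono : ∫ x in c..d, lam ≤ ∫ x in c..d, g'' x := by
      apply intervalIntegral.integral_mono_on hcd intervalIntegrable_const
        ((hcont.mono hsub).intervalIntegrable_of_Icc hcd)
      intro x hx
      exact hpos x (hsub hx)
    rw [hFTC] at hmono
    rw [intervalIntegral.integral_const, smul_eq_mul] at hmono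
    linarith [hmono]
  have mono : ∀ x ∈ Icc a b, ∀ y ∈ Icc a b, x ≤ y → g' x ≤ g' y := by
    intro x hx y hy hxy
    have := gap x hx y hy hxy
    nlinarith
  have h142 : 1 / (2 * δ) ≤ 4 / δ := by
    rw [div_le_div_iff₀ (by positivity) hδ]
    nlinarith
  by_cases hA : δ ≤ g' a
  · -- g' ≥ δ on all of [a,b]
    have hall : ∀ x ∈ Icc a b, δ ≤ g' x := fun x hx =>
      hA.trans (mono a ⟨le_rfl, hab⟩ x hx hx.1)
    have := vdc_fdt a b a b g g' g'' δ hδ hab le_rfl le_rfl hgc hg'c hcont hgd hg'd hpos'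
      (Or.inl hall)
    exact this.trans h142
  · by_cases hB : g' b ≤ -δ
    · have hall : ∀ x ∈ Icc a b, g' x ≤ -δ := fun x hx =>
        (mono x hx b ⟨hab, le_rfl⟩ hx.2).trans hB
      have := vdc_fdt a b a b g g' g'' δ hδ hab le_rfl le_rfl hgc hg'c hcont hgd hg'd hpos'
        (Or.inr hall)
      exact this.trans h142
    · push_neg at hA hB
      -- choose c
      obtain ⟨c, hcm, hc1, hc2⟩ : ∃ c ∈ Icc a b, -δ ≤ g' c ∧ (c = a ∨ g' c = -δ) := by
        by_cases h : -δ ≤ g' a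
        · exact ⟨a, ⟨le_rfl, hab⟩, h, Or.inl rfl⟩
        · push_neg at h
          have hmem : -δ ∈ Icc (g' a) (g' b) := ⟨h.le, hB.le⟩
          obtain ⟨c, hcm, hgc'⟩ := intermediate_value_Icc hab hg'c hmem
          exact ⟨c, hcm, hgc' ▸ le_rfl, Or.inr hgc'⟩
      obtain ⟨d, hdm, hd1, hd2⟩ : ∃ d ∈ Icc a b, g' d ≤ δ ∧ (d = b ∨ g' d = δ) := by
        by_cases h : g' b ≤ δ
        · exact ⟨b, ⟨hab, le_rfl⟩, h, Or.inl rfl⟩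
        · push_neg at h
          have hmem : δ ∈ Icc (g' a) (g' b) := ⟨hA.le, h.le⟩
          obtain ⟨d, hdm, hgd'⟩ := intermediate_value_Icc hab hg'c hmem
          exact ⟨d, hdm, hgd' ▸ le_rfl, Or.inr hgd'⟩
      have hcd : c ≤ d := by
        rcases hc2 with rfl | hc2
        · exact hdm.1
        · rcases hd2 with rfl | hd2
          · exact hcm.2
          · by_contra h
            push_neg at h
            have := mono d hdm c hcm h.le
            rw [hc2, hd2] at this
            linarith
      -- continuity and integrability of the oscillatory integrand
      have hEc : ContinuousOn (fun x => Complex.exp (K * (g x : ℂ))) (Icc a b) :=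
        Complex.continuous_exp.comp_continuousOn
          (continuousOn_const.mul (Complex.continuous_ofReal.comp_continuousOn hgc))
      have i1 : IntervalIntegrable (fun x => Complex.exp (K * (g x : ℂ))) volume a c :=
        (hEc.mono (Icc_subset_Icc le_rfl hcm.2)).intervalIntegrable_of_Icc hcm.1
      have i2 : IntervalIntegrable (fun x => Complex.exp (K * (g x : ℂ))) volume c d :=
        (hEc.mono (Icc_subset_Icc hcm.1 hdm.2)).intervalIntegrable_of_Icc hcd
      have i3 : IntervalIntegrable (fun x => Complex.exp (K * (g x : ℂ))) volume d b :=
        (hEc.mono (Icc_subset_Icc hdm.1 le_rfl)).intervalIntegrable_of_Icc hdm.2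
      have hsplit : (∫ x in a..b, Complex.exp (K * (g x : ℂ)))
          = (∫ x in a..c, Complex.exp (K * (g x : ℂ)))
            + (∫ x in c..d, Complex.exp (K * (g x : ℂ)))
            + (∫ x in d..b, Complex.exp (K * (g x : ℂ))) := by
        rw [intervalIntegral.integral_add_adjacent_intervals i1 i2,
          intervalIntegral.integral_add_adjacent_intervals (i1.trans i2) i3]
      -- left piece
      have hleft : ‖(∫ x in a..c, Complex.exp (K * (g x : ℂ)))‖ ≤ 1 / (2 * δ) := by
        rcases hc2 with rfl | hc2
        · rw [intervalIntegral.integral_same]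
          simp only [norm_zero]
          positivity
        · apply vdc_fdt a b a c g g' g'' δ hδ hcm.1 le_rfl hcm.2 hgc hg'c hcont hgd hg'd hpos'
          right
          intro x hx
          have hxm : x ∈ Icc a b := ⟨hx.1, hx.2.trans hcm.2⟩
          calc g' x ≤ g' c := mono x hxm c hcm hx.2
            _ = -δ := hc2
      -- right piece
      have hright : ‖(∫ x in d..b, Complex.exp (K * (g x : ℂ)))‖ ≤ 1 / (2 * δ) := by
        rcases hd2 with rfl | hd2
        · rw [intervalIntegral.integral_same]
          simp only [norm_zero]
          positivity
        · apply vdc_fdt a b d b g g' g'' δ hδ hdm.2 hdm.1 le_rfl hgc hg'c hcont hgd hg'd hpos'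
          left
          intro x hx
          have hxm : x ∈ Icc a b := ⟨hdm.1.trans hx.1, hx.2⟩
          calc δ = g' d := hd2.symm
            _ ≤ g' x := mono d hdm x hxm hx.1
      -- middle piece
      have hmidlen : d - c ≤ 2 / δ := by
        have h1 := gap c hcm d hdm hcd
        have h2 : g' d - g' c ≤ 2 * δ := by linarith
        rw [le_div_iff₀ hδ]
        nlinarith [h1, h2, hδ, hδ2]
      have hmid : ‖(∫ x in c..d, Complex.exp (K * (g x : ℂ)))‖ ≤ 2 / δ := by
        calc ‖∫ x in c..d, Complex.exp (K * (g x : ℂ))‖ ≤ 1 * |d - c| := by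
              apply intervalIntegral.norm_integral_le_of_norm_le_const
              intro x _
              rw [vdc_abs_e]
          _ = d - c := by rw [one_mul, abs_of_nonneg (by linarith)]
          _ ≤ 2 / δ := hmidlen
      rw [hsplit]
      have htri : ‖(∫ x in a..c, Complex.exp (K * (g x : ℂ)))
          + (∫ x in c..d, Complex.exp (K * (g x : ℂ)))
          + (∫ x in d..b, Complex.exp (K * (g x : ℂ)))‖
          ≤ ‖(∫ x in a..c, Complex.exp (K * (g x : ℂ)))‖
            + ‖(∫ x in c..d, Complex.exp (K * (g x : ℂ)))‖
            + ‖(∫ x in d..b, Complex.exp (K * (g x : ℂ)))‖ := by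
        calc ‖_ + _ + _‖ ≤ ‖_ + _‖ + ‖_‖ :=
              norm_add_le _ _
          _ ≤ _ + _ + _ := by
              have := norm_add_le (∫ x in a..c, Complex.exp (K * (g x : ℂ)))
                (∫ x in c..d, Complex.exp (K * (g x : ℂ)))
              linarith
      have hfinal : 1 / (2 * δ) + 2 / δ + 1 / (2 * δ) ≤ 4 / δ := by
        rw [div_add_div _ _ (by positivity) (by positivity),
          div_add_div _ _ (by positivity) (by positivity),
          div_le_div_iff₀ (by positivity) (by positivity)]
        ring_nf
        nlinarith
      calc ‖_ + _ + _‖ ≤ _ := htri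
        _ ≤ 1 / (2 * δ) + 2 / δ + 1 / (2 * δ) := by linarith
        _ ≤ 4 / δ := hfinal

/-- van der Corput second derivative test: If `g` is C² on `[a,b]` with
`g''` of constant sign and `|g''| ≥ λ > 0`, then `|∫_a^b e(g(x)) dx| ≤ 4/√λ`. -/
theorem second_derivative_test
    (a b : ℝ) (hab : a ≤ b) (g g' g'' : ℝ → ℝ) (lam : ℝ) (hlam : 0 < lam)
    (hg : ∀ x ∈ Icc a b, HasDerivWithinAt g (g' x) (Icc a b) x)
    (hg' : ∀ x ∈ Icc a b, HasDerivWithinAt g' (g'' x) (Icc a b) x)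
    (hcont : ContinuousOn g'' (Icc a b))
    (hsign : (∀ x ∈ Icc a b, 0 < g'' x) ∨ (∀ x ∈ Icc a b, g'' x < 0))
    (hlow : ∀ x ∈ Icc a b, lam ≤ |g'' x|) :
    ‖(∫ x in a..b, Complex.exp (2 * Real.pi * Complex.I * (g x : ℂ)))‖
      ≤ 4 / Real.sqrt lam := by
  rcases hsign with hpos | hneg
  · apply vdc_key a b hab g g' g'' lam hlam hg hg' hcont
    intro x hx
    have := hlow x hx
    rwa [abs_of_pos (hpos x hx)] at this
  · have key := vdc_key a b hab (fun x => -g x) (fun x => -g' x) (fun x => -g'' x) lam hlam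
      (fun x hx => (hg x hx).neg) (fun x hx => (hg' x hx).neg) hcont.neg
      (fun x hx => by
        have := hlow x hx
        rw [abs_of_neg (hneg x hx)] at this
        simpa using this)
    simp only [Complex.ofReal_neg] at key
    have hconj : (∫ x in a..b, Complex.exp (2 * (Real.pi : ℂ) * Complex.I * (-((g x : ℝ) : ℂ))))
        = (starRingEnd ℂ) (∫ x in a..b, Complex.exp (2 * (Real.pi : ℂ) * Complex.I * (g x : ℂ))) := by
      rw [← vdc_intervalIntegral_conj]
      apply intervalIntegral.integral_congr
      intro x _
      show Complex.exp (2 * (Real.pi : ℂ) * Complex.I * -((g x : ℝ) : ℂ))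
        = (starRingEnd ℂ) (Complex.exp (2 * (Real.pi : ℂ) * Complex.I * ((g x : ℝ) : ℂ)))
      rw [← Complex.exp_conj]
      congr 1
      simp only [map_mul, Complex.conj_I, Complex.conj_ofReal, map_ofNat]
      ring
    rw [hconj, Complex.norm_conj] at key
    exact key
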